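/- Let n ≥ 1 and a ≥ 1 be integers, and let I be the ideal of the polynomial ring ℂ[t₁, …, tₙ] generated by the elements t₁^a − t_i^a for 2 ≤ i ≤ n together with the product t₁·t₂⋯tₙ. Then the quotient ring ℂ[t₁, …, tₙ]/I is a finite-dimensional ℂ-vector space of dimension n·a^{n−1}. -/

import Mathlib

open MvPolynomial Finset

namespace DefRingAux

/-- rounded-up division helper -/
lemma ceil_eq (a : ℕ) (ha : 1 ≤ a) (t : ℕ) :
    t / a + (if t % a = 0 then 0 else 1) = (t + (a - 1)) / a := by
  rcases Nat.eq_zero_or_pos (t % a) with h | h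
  · obtain ⟨q, rfl⟩ := Nat.dvd_of_mod_eq_zero h
    rw [if_pos h, Nat.mul_div_cancel_left _ ha, add_zero, Nat.mul_add_div ha,
      Nat.div_eq_of_lt (by omega), add_zero]
  · rw [if_neg (by omega)]
    conv_rhs => rw [← Nat.div_add_mod t a, add_assoc, Nat.mul_add_div ha]
    have hlt : t % a < a := Nat.mod_lt _ ha
    rw [show (t % a + (a - 1)) / a = 1 from Nat.div_eq_of_lt_le (by omega) (by omega)]

lemma ceil_mono (a : ℕ) (ha : 1 ≤ a) {x y : ℕ} (hxy : x ≤ y) :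
    x / a + (if x % a = 0 then 0 else 1) ≤ y / a + (if y % a = 0 then 0 else 1) := by
  rw [ceil_eq a ha, ceil_eq a ha]
  exact Nat.div_le_div_right (by omega)

lemma div_split (a : ℕ) (ha : 1 ≤ a) (x m : ℕ) :
    (x + m) / a = x / a + (x % a + m) / a := by
  conv_lhs => rw [← Nat.div_add_mod x a, add_assoc, Nat.mul_add_div ha]

lemma mod_split (a : ℕ) (x m : ℕ) : (x + m) % a = (x % a + m) % a := by
  conv_lhs => rw [← Nat.div_add_mod x a, add_assoc, Nat.mul_add_mod]

end DefRingAux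

namespace DefRing

variable {n : ℕ} (a : ℕ) (z : Fin n)

/-- weight-one part `E₁`: total power of `t_z` after reduction -/
def E1 (g : Fin n → ℕ) : ℕ := g z + a * ∑ i : {i : Fin n // i ≠ z}, g i.1 / a

/-- number of nonzero reduced exponents away from `z` -/
def sC (g : Fin n → ℕ) : ℕ :=
  (Finset.univ.filter fun i : {i : Fin n // i ≠ z} => g i.1 % a ≠ 0).card

/-- the reduced (normal form) exponent vector -/
def red (g : Fin n → ℕ) : Fin n → ℕ := fun i => if i = z then E1 a z g else g i % a

/-- a monomial reduces to zero iff `Dead` holds -/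
def Dead (g : Fin n → ℕ) : Prop := a * (n - 1) < E1 a z g + a * sC a z g

instance : DecidablePred (Dead a z) := fun _ => Nat.decLt _ _

/-- normal form map on exponents, valued in the model vector space -/
noncomputable def NF (g : Fin n → ℕ) : ((Fin n → ℕ) →₀ ℂ) :=
  if Dead a z g then 0 else Finsupp.single (red a z g) 1

variable (ha : 1 ≤ a)
include ha

lemma E1_add (g m : Fin n → ℕ) : E1 a z (g + m) = E1 a z (red a z g + m) := by
  have hterm : ∀ i : {i : Fin n // i ≠ z},
      ((g + m) i.1) / a = g i.1 / a + ((red a z g + m) i.1) / a := by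
    intro i
    simp only [Pi.add_apply, red, if_neg i.2]
    exact DefRingAux.div_split a ha _ _
  have hz : (red a z g + m) z = E1 a z g + m z := by simp [red]
  unfold E1
  rw [Finset.sum_congr rfl fun i _ => hterm i, Finset.sum_add_distrib, mul_add, hz]
  unfold E1
  simp only [Pi.add_apply]
  ring

omit ha in
lemma mod_add (g m : Fin n → ℕ) (i : {i : Fin n // i ≠ z}) :
    ((g + m) i.1) % a = ((red a z g + m) i.1) % a := by
  simp only [Pi.add_apply, red, if_neg i.2]
  exact DefRingAux.mod_split a _ _

omit ha in
lemma sC_add (g m : Fin n → ℕ) : sC a z (g + m) = sC a z (red a z g + m) := by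
  unfold sC
  congr 1
  apply Finset.filter_congr
  intro i _
  rw [mod_add a z g m i]

lemma red_add (g m : Fin n → ℕ) : red a z (g + m) = red a z (red a z g + m) := by
  funext i
  by_cases hiz : i = z
  · simp only [red, if_pos hiz]
    exact E1_add a z ha g m
  · simp only [red, if_neg hiz]
    exact mod_add a z g m ⟨i, hiz⟩

lemma Dead_add (g m : Fin n → ℕ) : Dead a z (g + m) ↔ Dead a z (red a z g + m) := by
  unfold Dead
  rw [E1_add a z ha g m, sC_add a z g m]

lemma NF_add (g m : Fin n → ℕ) : NF a z (g + m) = NF a z (red a z g + m) := by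
  unfold NF
  by_cases hd : Dead a z (g + m)
  · rw [if_pos hd, if_pos ((Dead_add a z ha g m).mp hd)]
  · rw [if_neg hd, if_neg (fun h => hd ((Dead_add a z ha g m).mpr h)),
      red_add a z ha g m]

omit ha in
lemma weight_eq (g : Fin n → ℕ) :
    E1 a z g + a * sC a z g
      = g z + a * ∑ i : {i : Fin n // i ≠ z}, (g i.1 / a + if g i.1 % a = 0 then 0 else 1) := by
  unfold E1 sC
  rw [Finset.card_filter]
  have hsplit : ∑ i : {i : Fin n // i ≠ z}, (g i.1 / a + if g i.1 % a = 0 then 0 else 1)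
      = (∑ i : {i : Fin n // i ≠ z}, g i.1 / a)
        + ∑ i : {i : Fin n // i ≠ z}, (if g i.1 % a ≠ 0 then 1 else 0) := by
    rw [Finset.sum_add_distrib]
    congr 1
    refine Finset.sum_congr rfl fun i _ => ?_
    by_cases h : g i.1 % a = 0 <;> simp [h]
  rw [hsplit, mul_add]
  ring

lemma Dead_mono (g m : Fin n → ℕ) (hd : Dead a z g) : Dead a z (g + m) := by
  unfold Dead at hd ⊢
  refine lt_of_lt_of_le hd ?_
  rw [weight_eq a z, weight_eq a z]
  refine Nat.add_le_add (Nat.le_add_right _ _)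
    (Nat.mul_le_mul_left a (Finset.sum_le_sum fun i _ => ?_))
  exact DefRingAux.ceil_mono a ha (Nat.le_add_right _ _)

lemma NF_dead (g m : Fin n → ℕ) (hd : Dead a z g) : NF a z (g + m) = 0 := by
  unfold NF
  rw [if_pos (Dead_mono a z ha g m hd)]

end DefRing

namespace DefRing

variable {n : ℕ} (a : ℕ) (z : Fin n)

/-- the monomial with exponent vector `g` -/
noncomputable def F (g : Fin n → ℕ) : MvPolynomial (Fin n) ℂ :=
  monomial (Finsupp.equivFunOnFinite.symm g) 1

lemma coe_symm (g : Fin n → ℕ) : ⇑(Finsupp.equivFunOnFinite.symm g) = g :=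
  Finsupp.equivFunOnFinite.apply_symm_apply g

lemma F_mul (g h : Fin n → ℕ) : F g * F h = F (g + h) := by
  unfold F
  rw [monomial_mul, one_mul]
  have : Finsupp.equivFunOnFinite.symm g + Finsupp.equivFunOnFinite.symm h
      = Finsupp.equivFunOnFinite.symm (g + h) := by
    ext i
    rw [Finsupp.add_apply, congrFun (coe_symm g) i, congrFun (coe_symm h) i,
      congrFun (coe_symm (g + h)) i]
    rfl
  rw [this]

/-- the normal form linear map on polynomials -/
noncomputable def Phi : MvPolynomial (Fin n) ℂ →ₗ[ℂ] ((Fin n → ℕ) →₀ ℂ) :=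
  (basisMonomials (Fin n) ℂ).constr ℂ fun d => NF a z ⇑d

lemma Phi_monomial (d : Fin n →₀ ℕ) : Phi a z (monomial d 1) = NF a z ⇑d := by
  have hb : (basisMonomials (Fin n) ℂ) d = monomial d 1 :=
    congrFun (coe_basisMonomials (Fin n) ℂ) d
  rw [← hb]
  exact Module.Basis.constr_basis _ _ _ _

lemma Phi_F (g : Fin n → ℕ) : Phi a z (F g) = NF a z g := by
  rw [F, Phi_monomial, coe_symm]

/-- multiplication operator on the model space -/
noncomputable def mapN (m : Fin n → ℕ) :
    ((Fin n → ℕ) →₀ ℂ) →ₗ[ℂ] ((Fin n → ℕ) →₀ ℂ) :=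
  Finsupp.lsum ℂ fun f => LinearMap.toSpanSingleton ℂ _ (NF a z (f + m))

lemma mapN_single (m f : Fin n → ℕ) (c : ℂ) :
    mapN a z m (Finsupp.single f c) = c • NF a z (f + m) := by
  rw [mapN, Finsupp.lsum_single, LinearMap.toSpanSingleton_apply]

lemma NF_mul (ha : 1 ≤ a) (f d : Fin n → ℕ) :
    mapN a z d (NF a z f) = NF a z (f + d) := by
  by_cases hd : Dead a z f
  · have h1 : NF a z f = 0 := by rw [NF, if_pos hd]
    rw [h1, map_zero, NF_dead a z ha f d hd]
  · have h1 : NF a z f = Finsupp.single (red a z f) 1 := by rw [NF, if_neg hd]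
    rw [h1, mapN_single, one_smul, ← NF_add a z ha f d]

lemma Phi_monomial_mul (ha : 1 ≤ a) (d : Fin n →₀ ℕ) (p : MvPolynomial (Fin n) ℂ) :
    Phi a z (monomial d 1 * p) = mapN a z ⇑d (Phi a z p) := by
  have key : (Phi a z).comp (LinearMap.mulLeft ℂ (monomial d 1))
      = (mapN a z ⇑d).comp (Phi a z) := by
    apply (basisMonomials (Fin n) ℂ).ext
    intro f
    have hb : (basisMonomials (Fin n) ℂ) f = monomial f 1 :=
      congrFun (coe_basisMonomials (Fin n) ℂ) f
    rw [LinearMap.comp_apply, LinearMap.comp_apply, hb, LinearMap.mulLeft_apply,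
      monomial_mul, one_mul, Phi_monomial, Phi_monomial, Finsupp.coe_add,
      NF_mul a z ha, add_comm (⇑d) (⇑f)]
  exact LinearMap.congr_fun key p

lemma Phi_mul_zero (ha : 1 ≤ a) (x : MvPolynomial (Fin n) ℂ) (hx : Phi a z x = 0)
    (r : MvPolynomial (Fin n) ℂ) : Phi a z (r * x) = 0 := by
  have key : (Phi a z).comp (LinearMap.mulRight ℂ x) = 0 := by
    apply (basisMonomials (Fin n) ℂ).ext
    intro f
    have hb : (basisMonomials (Fin n) ℂ) f = monomial f 1 :=
      congrFun (coe_basisMonomials (Fin n) ℂ) f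
    rw [LinearMap.comp_apply, hb, LinearMap.mulRight_apply, Phi_monomial_mul a z ha, hx,
      map_zero, LinearMap.zero_apply]
  simpa using LinearMap.congr_fun key r

end DefRing

namespace DefRing

variable {n : ℕ} (a : ℕ) (z : Fin n)

lemma card_ne : Fintype.card {i : Fin n // i ≠ z} = n - 1 := by
  simp [Fintype.card_subtype_compl, Fintype.card_subtype_eq]

lemma E1_single (ha : 1 ≤ a) (j : Fin n) : E1 a z (Pi.single j a) = a := by
  unfold E1
  by_cases hj : j = z
  · subst hj
    rw [Pi.single_eq_same]
    have h0 : ∀ i : {i : Fin n // i ≠ j}, (Pi.single j a : Fin n → ℕ) i.1 / a = 0 := by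
      intro i
      have : (Pi.single j a : Fin n → ℕ) i.1 = 0 := Pi.single_eq_of_ne (M := fun _ : Fin n => ℕ) i.2 a
      rw [this, Nat.zero_div]
    rw [Finset.sum_congr rfl fun i _ => h0 i, Finset.sum_const_zero, mul_zero, add_zero]
  · rw [Pi.single_eq_of_ne (Ne.symm hj)]
    rw [Fintype.sum_eq_single (⟨j, hj⟩ : {i : Fin n // i ≠ z}) (fun b hb => by
      have hbj : b.1 ≠ j := fun h => hb (Subtype.ext h)
      have : (Pi.single j a : Fin n → ℕ) b.1 = 0 := Pi.single_eq_of_ne (M := fun _ : Fin n => ℕ) hbj a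
      rw [this, Nat.zero_div])]
    rw [Pi.single_eq_same, Nat.div_self ha]
    omega

lemma sC_single (j : Fin n) : sC a z (Pi.single j a) = 0 := by
  unfold sC
  rw [Finset.card_eq_zero, Finset.filter_eq_empty_iff]
  intro i _
  by_cases hij : i.1 = j
  · rw [hij, Pi.single_eq_same, Nat.mod_self]
    simp
  · rw [Pi.single_eq_of_ne hij]
    simp

lemma red_single (ha : 1 ≤ a) (j : Fin n) :
    red a z (Pi.single j a) = Pi.single z a := by
  funext i
  unfold red
  by_cases hiz : i = z
  · subst hiz
    rw [if_pos rfl, E1_single a i ha j, Pi.single_eq_same]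
  · rw [if_neg hiz, Pi.single_eq_of_ne hiz]
    by_cases hij : i = j
    · rw [hij, Pi.single_eq_same, Nat.mod_self]
    · rw [Pi.single_eq_of_ne hij, Nat.zero_mod]

lemma NF_single (ha : 1 ≤ a) (hn2 : 1 ≤ n - 1) (j : Fin n) :
    NF a z (Pi.single j a) = Finsupp.single (Pi.single z a) 1 := by
  unfold NF
  rw [if_neg, red_single a z ha j]
  unfold Dead
  rw [E1_single a z ha j, sC_single a z j, mul_zero, add_zero, not_lt]
  calc a = a * 1 := (mul_one a).symm
  _ ≤ a * (n - 1) := Nat.mul_le_mul_left a hn2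

lemma Phi_gen1 (ha : 1 ≤ a) (hn2 : 1 ≤ n - 1) (i : Fin n) (hi : i ≠ z) :
    Phi a z (X z ^ a - X i ^ a) = 0 := by
  rw [map_sub, X_pow_eq_monomial, X_pow_eq_monomial, Phi_monomial, Phi_monomial,
    Finsupp.single_eq_pi_single, Finsupp.single_eq_pi_single,
    NF_single a z ha hn2, NF_single a z ha hn2, sub_self]

lemma prod_X_eq : (∏ i : Fin n, (X i : MvPolynomial (Fin n) ℂ)) = F (fun _ => 1) := by
  have key : ∀ s : Finset (Fin n), (∏ i ∈ s, (X i : MvPolynomial (Fin n) ℂ))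
      = monomial (∑ i ∈ s, Finsupp.single i 1) 1 := by
    intro s
    induction s using Finset.induction_on with
    | empty => simp [monomial_zero']
    | @insert j s hnotmem ih =>
      rw [Finset.prod_insert hnotmem, Finset.sum_insert hnotmem, ih,
        show (X j : MvPolynomial (Fin n) ℂ) = monomial (Finsupp.single j 1) 1 from rfl,
        monomial_mul, one_mul]
  rw [key Finset.univ]
  unfold F
  have hexp : (∑ i : Fin n, Finsupp.single i 1)
      = Finsupp.equivFunOnFinite.symm (fun _ => (1 : ℕ)) := by
    ext j
    rw [Finsupp.finset_sum_apply]
    rw [congrFun (coe_symm (fun _ => (1 : ℕ))) j]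
    rw [Finset.sum_congr rfl fun i _ => Finsupp.single_apply]
    rw [Finset.sum_ite_eq' Finset.univ j (fun _ => (1 : ℕ)), if_pos (Finset.mem_univ j)]
  rw [hexp]

lemma NF_ones (ha : 1 ≤ a) : NF a z (fun _ => (1 : ℕ)) = 0 := by
  unfold NF
  rw [if_pos]
  unfold Dead E1 sC
  rcases eq_or_lt_of_le ha with h1 | h2
  · have ha1 : a = 1 := h1.symm
    subst ha1
    simp only [Nat.div_one, Nat.mod_one]
    rw [Finset.sum_const, Finset.filter_eq_empty_iff.mpr (fun i _ => by simp)]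
    simp [Finset.card_univ, card_ne]
  · have hd : (1 : ℕ) / a = 0 := Nat.div_eq_of_lt h2
    have hm : (1 : ℕ) % a = 1 := Nat.mod_eq_of_lt h2
    simp only [hd, hm]
    rw [Finset.sum_const_zero, mul_zero, add_zero,
      Finset.filter_true_of_mem (fun i _ => one_ne_zero)]
    rw [Finset.card_univ, card_ne]
    omega

lemma Phi_gen2 (ha : 1 ≤ a) : Phi a z (∏ i : Fin n, (X i : MvPolynomial (Fin n) ℂ)) = 0 := by
  rw [prod_X_eq, Phi_F, NF_ones a z ha]

lemma Phi_ideal (ha : 1 ≤ a) (p : MvPolynomial (Fin n) ℂ)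
    (hp : p ∈ Ideal.span
      ({q | ∃ i : Fin n, i ≠ z ∧ q = X z ^ a - X i ^ a} ∪
        {∏ i : Fin n, X i} : Set (MvPolynomial (Fin n) ℂ))) :
    Phi a z p = 0 := by
  induction hp using Submodule.span_induction with
  | mem x hx =>
    rcases hx with hx | hx
    · obtain ⟨i, hi, rfl⟩ := hx
      have hnt : Nontrivial (Fin n) := ⟨⟨i, z, hi⟩⟩
      have h2 : 1 < n := by
        have := Fintype.one_lt_card (α := Fin n)
        rwa [Fintype.card_fin] at this
      exact Phi_gen1 a z ha (by omega) i hi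
    · rw [Set.mem_singleton_iff] at hx
      subst hx
      exact Phi_gen2 a z ha
  | zero => exact map_zero _
  | add x y _ _ ihx ihy => rw [map_add, ihx, ihy, add_zero]
  | smul r x _ ih =>
    rw [smul_eq_mul]
    exact Phi_mul_zero a z ha x ih r

end DefRing

namespace DefRing

section Quot

variable {R : Type*} [CommRing R] {n : ℕ} (a : ℕ) (z : Fin n) (y : Fin n → R)

lemma prod_univ_split (f : Fin n → R) :
    ∏ i : Fin n, f i = f z * ∏ i : {i : Fin n // i ≠ z}, f i.1 := by
  rw [← Finset.mul_prod_erase Finset.univ f (Finset.mem_univ z)]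
  congr 1
  exact Finset.prod_subtype (Finset.univ.erase z)
    (fun x => by simp [Finset.mem_erase]) f

lemma SP1 (ha : 1 ≤ a) (hy : ∀ i : Fin n, i ≠ z → y i ^ a = y z ^ a) (g : Fin n → ℕ) :
    (∏ i : Fin n, y i ^ g i)
      = y z ^ E1 a z g * ∏ i : {i : Fin n // i ≠ z}, y i.1 ^ (g i.1 % a) := by
  rw [prod_univ_split z (fun i => y i ^ g i)]
  have hterm : ∀ i : {i : Fin n // i ≠ z},
      y i.1 ^ g i.1 = (y z ^ a) ^ (g i.1 / a) * y i.1 ^ (g i.1 % a) := by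
    intro i
    rw [← hy i.1 i.2, ← pow_mul, ← pow_add]
    congr 1
    exact (Nat.div_add_mod (g i.1) a).symm
  rw [Finset.prod_congr rfl fun i _ => hterm i, Finset.prod_mul_distrib,
    Finset.prod_pow_eq_pow_sum, ← pow_mul, ← mul_assoc, ← pow_add]
  rfl

lemma E1_red (ha : 1 ≤ a) (g : Fin n → ℕ) : E1 a z (red a z g) = E1 a z g := by
  have h := E1_add a z ha g 0
  simpa using h.symm

lemma mod_red (g : Fin n → ℕ) (i : {i : Fin n // i ≠ z}) :
    (red a z g) i.1 % a = g i.1 % a := by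
  have h := mod_add a z g 0 i
  simpa using h.symm

lemma SP2 (ha : 1 ≤ a) (hy : ∀ i : Fin n, i ≠ z → y i ^ a = y z ^ a)
    (hprod : ∏ i : Fin n, y i = 0) : ∀ (k : ℕ) (T : Finset {i : Fin n // i ≠ z}), n - 1 ≤ T.card + k →
    y z ^ (a * ((n - 1) - T.card) + 1) * ∏ i ∈ T, y i.1 = 0 := by
  intro k
  induction k with
  | zero =>
    intro T hT
    have hcu : T.card ≤ n - 1 := by
      have := Finset.card_le_univ T
      rwa [card_ne] at this
    have hcard : T.card = n - 1 := by omega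
    have hTu : T = Finset.univ := Finset.eq_univ_of_card T (by rw [hcard, card_ne])
    rw [hcard, Nat.sub_self, mul_zero, zero_add, pow_one, hTu]
    rw [← prod_univ_split z y]
    exact hprod
  | succ k ih =>
    intro T hT
    rcases le_or_gt (n - 1) T.card with hc | hc
    · exact ih T (by omega)
    · have hne : T ≠ Finset.univ := by
        intro h
        rw [h, Finset.card_univ, card_ne] at hc
        omega
      obtain ⟨i, hiT⟩ : ∃ i, i ∉ T := by
        by_contra h
        push_neg at h
        exact hne (Finset.eq_univ_of_forall h)
      have hins : y z ^ (a * ((n - 1) - (T.card + 1)) + 1) * ∏ j ∈ insert i T, y j.1 = 0 := by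
        have h := ih (insert i T) (by rw [Finset.card_insert_of_notMem hiT]; omega)
        rwa [Finset.card_insert_of_notMem hiT] at h
      have hsplit : a * ((n - 1) - T.card) + 1 = a * ((n - 1) - (T.card + 1)) + a + 1 := by
        have h1 : (n - 1) - T.card = ((n - 1) - (T.card + 1)) + 1 := by omega
        rw [h1, Nat.mul_add, Nat.mul_one]
      have hyi : y i.1 ^ a = y z ^ a := hy i.1 i.2
      have hpow : y i.1 ^ a = y i.1 ^ (a - 1) * y i.1 := by
        conv_lhs => rw [show a = (a - 1) + 1 from (Nat.sub_add_cancel ha).symm]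
        rw [pow_succ]
      have hprodins : ∏ j ∈ insert i T, y j.1 = y i.1 * ∏ j ∈ T, y j.1 :=
        Finset.prod_insert hiT
      rw [hsplit]
      calc y z ^ (a * ((n - 1) - (T.card + 1)) + a + 1) * ∏ j ∈ T, y j.1
          = y z ^ a * (y z ^ (a * ((n - 1) - (T.card + 1)) + 1) * ∏ j ∈ T, y j.1) := by
            ring
        _ = y i.1 ^ (a - 1) * y i.1 * (y z ^ (a * ((n - 1) - (T.card + 1)) + 1)
              * ∏ j ∈ T, y j.1) := by rw [← hpow, hyi]
        _ = y i.1 ^ (a - 1) * (y z ^ (a * ((n - 1) - (T.card + 1)) + 1)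
              * ∏ j ∈ insert i T, y j.1) := by rw [hprodins]; ring
        _ = 0 := by rw [hins, mul_zero]

lemma SP_dead (ha : 1 ≤ a) (hy : ∀ i : Fin n, i ≠ z → y i ^ a = y z ^ a)
    (hprod : ∏ i : Fin n, y i = 0) (g : Fin n → ℕ) (hd : Dead a z g) : ∏ i : Fin n, y i ^ g i = 0 := by
  rw [SP1 a z y ha hy g]
  set s := sC a z g with hs
  set e := E1 a z g with he
  set T := Finset.univ.filter (fun i : {i : Fin n // i ≠ z} => g i.1 % a ≠ 0) with hT
  have hTcard : T.card = s := rfl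
  have hsle : s ≤ n - 1 := by
    have h1 := Finset.card_le_univ T
    rw [card_ne, hTcard] at h1
    exact h1
  have hE : a * ((n - 1) - s) + 1 ≤ e := by
    unfold Dead at hd
    rw [← he, ← hs] at hd
    have h1 : a * ((n - 1) - s) + a * s = a * (n - 1) := by
      rw [← Nat.mul_add]
      congr 1
      omega
    have h2 : a * ((n - 1) - s) < e := Nat.lt_of_add_lt_add_right (h1 ▸ hd)
    omega
  have hprodsplit : ∏ i : {i : Fin n // i ≠ z}, y i.1 ^ (g i.1 % a)
      = ∏ i ∈ T, y i.1 ^ (g i.1 % a) := by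
    symm
    apply Finset.prod_subset (Finset.filter_subset _ _)
    intro x hx hxT
    rw [Finset.mem_filter] at hxT
    push_neg at hxT
    rw [hxT hx, pow_zero]
  have hfact : ∀ i ∈ T, y i.1 ^ (g i.1 % a) = y i.1 * y i.1 ^ (g i.1 % a - 1) := by
    intro i hi
    rw [Finset.mem_filter] at hi
    have hpos : 1 ≤ g i.1 % a := by omega
    conv_lhs => rw [show g i.1 % a = 1 + (g i.1 % a - 1) by omega, pow_add, pow_one]
  have h0 : y z ^ (a * ((n - 1) - s) + 1) * ∏ i ∈ T, y i.1 = 0 := by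
    have := SP2 a z y ha hy hprod (n - 1) T (by omega)
    rwa [hTcard] at this
  rw [hprodsplit, Finset.prod_congr rfl hfact, Finset.prod_mul_distrib,
    show e = (a * ((n - 1) - s) + 1) + (e - (a * ((n - 1) - s) + 1)) by omega, pow_add]
  calc (y z ^ (a * ((n - 1) - s) + 1) * y z ^ (e - (a * ((n - 1) - s) + 1)))
        * ((∏ i ∈ T, y i.1) * ∏ i ∈ T, y i.1 ^ (g i.1 % a - 1))
      = (y z ^ (a * ((n - 1) - s) + 1) * ∏ i ∈ T, y i.1)
        * (y z ^ (e - (a * ((n - 1) - s) + 1)) * ∏ i ∈ T, y i.1 ^ (g i.1 % a - 1)) := by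
        ring
    _ = 0 := by rw [h0, zero_mul]

lemma SP_red (ha : 1 ≤ a) (hy : ∀ i : Fin n, i ≠ z → y i ^ a = y z ^ a) (g : Fin n → ℕ) :
    ∏ i : Fin n, y i ^ g i = ∏ i : Fin n, y i ^ (red a z g i) := by
  rw [SP1 a z y ha hy g, SP1 a z y ha hy (red a z g), E1_red a z ha g]
  congr 1
  exact Finset.prod_congr rfl fun i _ => by rw [mod_red a z g i]

end Quot

end DefRing

namespace DefRing

variable {n : ℕ} (a : ℕ) (z : Fin n)

/-- number of nonzero coordinates -/
def sCount (r : {i : Fin n // i ≠ z} → Fin a) : ℕ :=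
  (Finset.univ.filter fun i => (r i).1 ≠ 0).card

/-- index type for the standard monomial basis -/
abbrev Idx : Type := Σ r : ({i : Fin n // i ≠ z} → Fin a),
  Fin (a * ((n - 1) - sCount a z r) + 1)

/-- exponent vector of a standard monomial -/
def emb (x : Idx a z) : Fin n → ℕ := fun i => if h : i = z then x.2.1 else (x.1 ⟨i, h⟩).1

lemma emb_z (x : Idx a z) : emb a z x z = x.2.1 := by
  unfold emb
  rw [dif_pos rfl]

lemma emb_ne (x : Idx a z) (i : {i : Fin n // i ≠ z}) : emb a z x i.1 = (x.1 i).1 := by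
  unfold emb
  rw [dif_neg i.2]

lemma E1_emb (ha : 1 ≤ a) (x : Idx a z) : E1 a z (emb a z x) = x.2.1 := by
  unfold E1
  rw [emb_z]
  have h0 : ∀ i : {i : Fin n // i ≠ z}, emb a z x i.1 / a = 0 := fun i => by
    rw [emb_ne a z x i]
    exact Nat.div_eq_of_lt (x.1 i).isLt
  rw [Finset.sum_congr rfl fun i _ => h0 i, Finset.sum_const_zero, mul_zero, add_zero]

lemma sC_emb (x : Idx a z) : sC a z (emb a z x) = sCount a z x.1 := by
  unfold sC sCount
  congr 1
  apply Finset.filter_congr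
  intro i _
  rw [emb_ne a z x i, Nat.mod_eq_of_lt (x.1 i).isLt]

lemma sCount_le (r : {i : Fin n // i ≠ z} → Fin a) : sCount a z r ≤ n - 1 := by
  have h := Finset.card_le_univ (Finset.univ.filter fun i : {i : Fin n // i ≠ z} => (r i).1 ≠ 0)
  rwa [card_ne] at h

lemma alive_emb (ha : 1 ≤ a) (x : Idx a z) : ¬ Dead a z (emb a z x) := by
  unfold Dead
  rw [E1_emb a z ha x, sC_emb a z x, not_lt]
  have h1 : x.2.1 ≤ a * ((n - 1) - sCount a z x.1) := Nat.lt_succ_iff.mp x.2.isLt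
  have h2 : a * ((n - 1) - sCount a z x.1) + a * sCount a z x.1 = a * (n - 1) := by
    rw [← Nat.mul_add]
    congr 1
    have := sCount_le a z x.1
    omega
  omega
lemma red_emb (ha : 1 ≤ a) (x : Idx a z) : red a z (emb a z x) = emb a z x := by
  funext i
  unfold red
  by_cases hiz : i = z
  · rw [if_pos hiz, hiz, emb_z, E1_emb a z ha x]
  · rw [if_neg hiz, emb_ne a z x ⟨i, hiz⟩, Nat.mod_eq_of_lt (x.1 ⟨i, hiz⟩).isLt]

lemma NF_emb (ha : 1 ≤ a) (x : Idx a z) :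
    NF a z (emb a z x) = Finsupp.single (emb a z x) 1 := by
  unfold NF
  rw [if_neg (alive_emb a z ha x), red_emb a z ha x]

lemma emb_inj : Function.Injective (emb a z) := by
  rintro ⟨r1, k1⟩ ⟨r2, k2⟩ h
  have hr : r1 = r2 := by
    funext i
    apply Fin.ext
    have h1 := emb_ne a z ⟨r1, k1⟩ i
    have h2 := emb_ne a z ⟨r2, k2⟩ i
    rw [← h1, ← h2, h]
  subst hr
  have hk : k1 = k2 := by
    apply Fin.ext
    have h1 := emb_z a z ⟨r1, k1⟩
    have h2 := emb_z a z ⟨r1, k2⟩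
    rw [← h1, ← h2, h]
  subst hk
  rfl

end DefRing

namespace DefRing

variable {n : ℕ} (a : ℕ) (z : Fin n)

lemma card_Idx (ha : 1 ≤ a) : Fintype.card (Idx a z) = n * a ^ (n - 1) := by
  have hn : 1 ≤ n := Fin.pos z
  rw [Fintype.card_sigma]
  have h1 : ∀ r : ({i : Fin n // i ≠ z} → Fin a),
      Fintype.card (Fin (a * ((n - 1) - sCount a z r) + 1))
        = 1 + ∑ i : {i : Fin n // i ≠ z}, (if (r i).1 = 0 then a else 0) := by
    intro r
    rw [Fintype.card_fin]
    have hh := Finset.card_filter_add_card_filter_not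
      (s := (Finset.univ : Finset {i : Fin n // i ≠ z})) (p := fun i => (r i).1 = 0)
    rw [Finset.card_univ, card_ne] at hh
    have hsC : sCount a z r
        = (Finset.univ.filter fun i : {i : Fin n // i ≠ z} => ¬ ((r i).1 = 0)).card := rfl
    have hcompl : (Finset.univ.filter fun i : {i : Fin n // i ≠ z} => (r i).1 = 0).card
        = (n - 1) - sCount a z r := by omega
    have hsum : (∑ i : {i : Fin n // i ≠ z}, if (r i).1 = 0 then a else 0)
        = ((n - 1) - sCount a z r) * a := by
      rw [← Finset.sum_filter, Finset.sum_const, smul_eq_mul, hcompl]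
    rw [hsum]
    ring
  rw [Finset.sum_congr rfl fun r _ => h1 r, Finset.sum_add_distrib, Finset.sum_const,
    Finset.card_univ, smul_eq_mul, mul_one]
  have hcf : Fintype.card ({i : Fin n // i ≠ z} → Fin a) = a ^ (n - 1) := by
    rw [Fintype.card_fun, Fintype.card_fin, card_ne]
  rw [hcf, Finset.sum_comm]
  have hinner : ∀ i : {i : Fin n // i ≠ z},
      (∑ r : ({i : Fin n // i ≠ z} → Fin a), if (r i).1 = 0 then a else 0)
        = a ^ (n - 1 - 1) * a := by
    intro i
    rw [Fintype.sum_equiv (Equiv.piSplitAt i (fun _ => Fin a))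
      (fun r => if (r i).1 = 0 then a else 0)
      (fun p => if (p.1).1 = 0 then a else 0) (fun r => rfl)]
    rw [Fintype.sum_prod_type]
    have hstep : ∀ v : Fin a,
        (∑ _w : ({j : {i : Fin n // i ≠ z} // j ≠ i} → Fin a), if v.1 = 0 then a else 0)
          = a ^ (n - 1 - 1) * (if v.1 = 0 then a else 0) := by
      intro v
      rw [Finset.sum_const, Finset.card_univ, smul_eq_mul]
      congr 1
      rw [Fintype.card_fun, Fintype.card_fin]
      congr 1
      simp [Fintype.card_subtype_compl, Fintype.card_subtype_eq, card_ne]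
    rw [Finset.sum_congr rfl fun v _ => hstep v, ← Finset.mul_sum]
    congr 1
    rw [Fin.sum_univ_eq_sum_range (fun k => if k = 0 then a else 0) a]
    rw [Finset.sum_ite_eq' (Finset.range a) 0 (fun _ => a),
      if_pos (Finset.mem_range.mpr (by omega))]
  rw [Finset.sum_congr rfl fun i _ => hinner i, Finset.sum_const, Finset.card_univ,
    card_ne, smul_eq_mul]
  obtain ⟨m, rfl⟩ : ∃ m, n = m + 1 := ⟨n - 1, by omega⟩
  simp only [Nat.add_sub_cancel]
  rcases Nat.eq_zero_or_pos m with hm | hm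
  · subst hm
    simp
  · have hpow : a ^ (m - 1) * a = a ^ m := by
      rw [← pow_succ]
      congr 1
      omega
    rw [hpow]
    ring

end DefRing

namespace DefRing

variable {n : ℕ} (a : ℕ) (z : Fin n)

lemma sC_le (g : Fin n → ℕ) : sC a z g ≤ n - 1 := by
  have h := Finset.card_le_univ
    (Finset.univ.filter fun i : {i : Fin n // i ≠ z} => g i.1 % a ≠ 0)
  rwa [card_ne] at h

lemma exists_idx (ha : 1 ≤ a) (g : Fin n → ℕ) (hg : ¬ Dead a z g) :
    ∃ x : Idx a z, emb a z x = red a z g := by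
  have hbd : E1 a z g ≤ a * ((n - 1) - sC a z g) := by
    unfold Dead at hg
    rw [not_lt] at hg
    have hs := sC_le a z g
    have h1 : a * ((n - 1) - sC a z g) + a * sC a z g = a * (n - 1) := by
      rw [← Nat.mul_add]
      congr 1
      omega
    exact Nat.le_of_add_le_add_right (h1 ▸ hg)
  set r : {i : Fin n // i ≠ z} → Fin a := fun i => ⟨g i.1 % a, Nat.mod_lt _ (by omega)⟩ with hr
  have hsc : sCount a z r = sC a z g := rfl
  refine ⟨⟨r, ⟨E1 a z g, by rw [hsc]; omega⟩⟩, ?_⟩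
  funext i
  unfold emb red
  by_cases hiz : i = z
  · rw [dif_pos hiz, if_pos hiz]
  · rw [dif_neg hiz, if_neg hiz]

end DefRing

open DefRing in
/-- Let `I ⊆ ℂ[t₁, …, tₙ]` be the ideal generated by `t₁^a - t_i^a` for `2 ≤ i ≤ n`
together with `t₁ t₂ ⋯ tₙ`. Then `ℂ[t₁, …, tₙ]/I` is a finite-dimensional ℂ-vector
space of dimension `n * a^(n-1)`. -/
theorem dimension_of_admissible_deformation_ring (n a : ℕ) (hn : 1 ≤ n) (ha : 1 ≤ a)
    (I : Ideal (MvPolynomial (Fin n) ℂ))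
    (hI : I = Ideal.span
      ({p | ∃ i : Fin n, i ≠ ⟨0, hn⟩ ∧ p = X (⟨0, hn⟩ : Fin n) ^ a - X i ^ a} ∪
        {∏ i : Fin n, X i})) :
    FiniteDimensional ℂ (MvPolynomial (Fin n) ℂ ⧸ I) ∧
      Module.finrank ℂ (MvPolynomial (Fin n) ℂ ⧸ I) = n * a ^ (n - 1) := by
  set z : Fin n := ⟨0, hn⟩ with hz
  have hIs : I = Ideal.span
      ({q | ∃ i : Fin n, i ≠ z ∧ q = X z ^ a - X i ^ a} ∪
        {∏ i : Fin n, X i} : Set (MvPolynomial (Fin n) ℂ)) := hI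
  clear hI
  set J := Ideal.span
      ({q | ∃ i : Fin n, i ≠ z ∧ q = X z ^ a - X i ^ a} ∪
        {∏ i : Fin n, X i} : Set (MvPolynomial (Fin n) ℂ)) with hJ
  subst hIs
  set mk := Ideal.Quotient.mkₐ ℂ J with hmk
  set y : Fin n → (MvPolynomial (Fin n) ℂ ⧸ J) := fun i => mk (X i) with hy
  have hygen : ∀ i : Fin n, i ≠ z → y i ^ a = y z ^ a := by
    intro i hi
    have hmem : (X z ^ a - X i ^ a : MvPolynomial (Fin n) ℂ) ∈ J :=
      Ideal.subset_span (Or.inl ⟨i, hi, rfl⟩)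
    have h0 : mk (X z ^ a - X i ^ a) = 0 := by
      rw [hmk, Ideal.Quotient.mkₐ_eq_mk, Ideal.Quotient.eq_zero_iff_mem]
      exact hmem
    rw [map_sub, map_pow, map_pow, sub_eq_zero] at h0
    exact h0.symm
  have hyprod : ∏ i : Fin n, y i = 0 := by
    have hmem : (∏ i : Fin n, X i : MvPolynomial (Fin n) ℂ) ∈ J :=
      Ideal.subset_span (Or.inr rfl)
    rw [hy]
    simp only []
    rw [← map_prod]
    rw [hmk, Ideal.Quotient.mkₐ_eq_mk, Ideal.Quotient.eq_zero_iff_mem]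
    exact hmem
  have hmkF : ∀ g : Fin n → ℕ, mk (F g) = ∏ i : Fin n, y i ^ g i := by
    intro g
    rw [show F g = ∏ i : Fin n, X i ^ g i from ?_, map_prod]
    · exact Finset.prod_congr rfl fun i _ => map_pow _ _ _
    · rw [F, monomial_eq, C_1, one_mul, Finsupp.prod_pow]
      exact Finset.prod_congr rfl fun i _ => by rw [congrFun (coe_symm g) i]
  set b : Idx a z → (MvPolynomial (Fin n) ℂ ⧸ J) := fun x => mk (F (emb a z x)) with hb
  -- membership of all monomials in the span of b
  have hmono : ∀ g : Fin n → ℕ, mk (F g) ∈ Submodule.span ℂ (Set.range b) := by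
    intro g
    by_cases hd : Dead a z g
    · rw [hmkF g, SP_dead a z y ha hygen hyprod g hd]
      exact Submodule.zero_mem _
    · have hred : mk (F g) = mk (F (red a z g)) := by
        rw [hmkF g, hmkF (red a z g)]
        exact SP_red a z y ha hygen g
      obtain ⟨x, hx⟩ := exists_idx a z ha g hd
      rw [hred, ← hx]
      exact Submodule.subset_span ⟨x, rfl⟩
  have hspan : ⊤ ≤ Submodule.span ℂ (Set.range b) := by
    intro q _
    obtain ⟨p, rfl⟩ := Ideal.Quotient.mkₐ_surjective ℂ (I := J) q
    rw [← MvPolynomial.support_sum_monomial_coeff p, map_sum]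
    apply Submodule.sum_mem
    intro d _
    have hsm : (monomial d) (coeff d p) = (coeff d p) • F ⇑d := by
      rw [F, Finsupp.equivFunOnFinite_symm_coe, smul_monomial, smul_eq_mul, mul_one]
    rw [hsm, map_smul]
    exact Submodule.smul_mem _ _ (hmono ⇑d)
  have hindep : LinearIndependent ℂ b := by
    rw [Fintype.linearIndependent_iff]
    intro c hc x₀
    have hmem : (∑ x : Idx a z, c x • F (emb a z x)) ∈ J := by
      rw [← Ideal.Quotient.eq_zero_iff_mem, ← Ideal.Quotient.mkₐ_eq_mk ℂ, ← hmk, map_sum]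
      rw [Finset.sum_congr rfl fun x _ => map_smul mk (c x) (F (emb a z x))]
      exact hc
    have hphi := Phi_ideal a z ha _ hmem
    rw [map_sum] at hphi
    have hterm : ∀ x : Idx a z, Phi a z (c x • F (emb a z x))
        = Finsupp.single (emb a z x) (c x) := by
      intro x
      rw [map_smul, Phi_F, NF_emb a z ha x, Finsupp.smul_single, smul_eq_mul, mul_one]
    rw [Finset.sum_congr rfl fun x _ => hterm x] at hphi
    have heval := DFunLike.congr_fun hphi (emb a z x₀)
    rw [Finsupp.finset_sum_apply, Finsupp.coe_zero, Pi.zero_apply] at heval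
    rw [Finset.sum_eq_single x₀ (fun x _ hx => by
        rw [Finsupp.single_apply,
          if_neg (fun h => hx (emb_inj a z h))]) (fun h => absurd (Finset.mem_univ x₀) h)]
      at heval
    rwa [Finsupp.single_apply, if_pos rfl] at heval
  have B : Module.Basis (Idx a z) ℂ (MvPolynomial (Fin n) ℂ ⧸ J) := Module.Basis.mk hindep hspan
  refine ⟨Module.Finite.of_basis B, ?_⟩
  rw [Module.finrank_eq_card_basis B, card_Idx a z ha]
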